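/- arXiv:1802.04943 — 3 statements merged into one kernel-verified Lean document; each statement's English description precedes it below -/
import Mathlib

section
/- Consider the scalar recursion u(t+1) ≤ (1 - r₁(t)) u(t) + r₂(t) with u(0) ≥ 0, a₁/(t+1)^{δ₁} ≤ r₁(t) ≤ 1 (a₁ > 0, 0 ≤ δ₁ ≤ 1), and r₂(t) ≤ a₂/(t+1)^{δ₂} (a₂ > 0). If δ₁ = δ₂, then the sequence u(t) stays bounded: sup_{t ≥ 0} u(t) < ∞. -/
/-- Time-varying scalar recursion with `δ₁ = δ₂`: if
`u(t+1) ≤ (1 - r₁(t)) u(t) + r₂(t)` with `u(0) ≥ 0`,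
`a₁/(t+1)^{δ₁} ≤ r₁(t) ≤ 1` (`a₁ > 0`, `0 ≤ δ₁ ≤ 1`) and
`r₂(t) ≤ a₂/(t+1)^{δ₁}` (`a₂ > 0`), then `u` stays bounded. -/
theorem scalar_recursion_bounded (u r₁ r₂ : ℕ → ℝ) (a₁ a₂ δ₁ : ℝ)
    (hu0 : 0 ≤ u 0)
    (ha₁ : 0 < a₁) (hδ₁0 : 0 ≤ δ₁) (hδ₁1 : δ₁ ≤ 1)
    (ha₂ : 0 < a₂)
    (hr₁l : ∀ t : ℕ, a₁ / ((t : ℝ) + 1) ^ δ₁ ≤ r₁ t) (hr₁u : ∀ t, r₁ t ≤ 1)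
    (hr₂ : ∀ t : ℕ, r₂ t ≤ a₂ / ((t : ℝ) + 1) ^ δ₁)
    (hrec : ∀ t, u (t + 1) ≤ (1 - r₁ t) * u t + r₂ t) :
    BddAbove (Set.range u) := by
  set M : ℝ := max (u 0) (a₂ / a₁) with hM
  refine ⟨M, ?_⟩
  rintro x ⟨t, rfl⟩
  induction t with
  | zero => exact le_max_left _ _
  | succ t ih =>
    have hpow : (0:ℝ) < ((t : ℝ) + 1) ^ δ₁ :=
      Real.rpow_pos_of_pos (by positivity) _
    have hr₁pos : 0 < r₁ t :=
      lt_of_lt_of_le (div_pos ha₁ hpow) (hr₁l t)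
    have hM0 : 0 ≤ M := le_trans hu0 (le_max_left _ _)
    have h1 : (1 - r₁ t) * u t ≤ (1 - r₁ t) * M :=
      mul_le_mul_of_nonneg_left ih (by linarith [hr₁u t])
    have h2 : a₂ / ((t : ℝ) + 1) ^ δ₁ ≤ r₁ t * M := by
      have hMa : a₂ / a₁ ≤ M := le_max_right _ _
      have : (a₁ / ((t : ℝ) + 1) ^ δ₁) * (a₂ / a₁) ≤ r₁ t * M := by
        apply mul_le_mul (hr₁l t) hMa (by positivity) (le_of_lt hr₁pos)
      calc a₂ / ((t : ℝ) + 1) ^ δ₁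
          = (a₁ / ((t : ℝ) + 1) ^ δ₁) * (a₂ / a₁) := by
            field_simp
        _ ≤ r₁ t * M := this
    calc u (t + 1) ≤ (1 - r₁ t) * u t + r₂ t := hrec t
      _ ≤ (1 - r₁ t) * M + a₂ / ((t : ℝ) + 1) ^ δ₁ := add_le_add h1 (hr₂ t)
      _ ≤ (1 - r₁ t) * M + r₁ t * M := by linarith [h2]
      _ = M := by ring
end

section
/- Let M be a real symmetric positive semidefinite d×d matrix restricted to a subspace S on which y^T M y ≥ c₁‖y‖² for all y ∈ S with c₁ > 0, and let α_t = a/(t+1), β_t = b/(t+1)^{δ₁} with 0 < δ₁ < 1. Then there exists t₀ such that for all t ≥ t₀ and all y ∈ S, ‖(I - β_t B - α_t A) y‖ ≤ (1 - c α_t)‖y‖ for some constant c > 0, where A, B are symmetric positive semidefinite matrices preserving S with β_t B + α_t A ⪰ α_t (β₀/α₀ B + A) restricted to S and y^T((β₀/α₀)B + A)y ≥ c₁‖y‖² on S. -/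
open Matrix
open Filter

lemma quad_ub {d : ℕ} (M : Matrix (Fin d) (Fin d) ℝ) (x : Fin d → ℝ) :
    x ⬝ᵥ M *ᵥ x ≤ (∑ i, ∑ j, |M i j|) * (x ⬝ᵥ x) := by
  have hS : (0:ℝ) ≤ x ⬝ᵥ x := by
    simp only [dotProduct]
    exact Finset.sum_nonneg fun i _ => mul_self_nonneg _
  have hx2 : ∀ i, x i * x i ≤ x ⬝ᵥ x := by
    intro i
    simp only [dotProduct]
    exact Finset.single_le_sum (fun j _ => mul_self_nonneg (x j)) (Finset.mem_univ i)
  have key : ∀ i j, x i * (M i j * x j) ≤ |M i j| * (x ⬝ᵥ x) := by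
    intro i j
    have h1 := hx2 i
    have h2 := hx2 j
    have habs : x i * x j ≤ x ⬝ᵥ x := by nlinarith [sq_nonneg (x i - x j)]
    have habs' : -(x ⬝ᵥ x) ≤ x i * x j := by nlinarith [sq_nonneg (x i + x j)]
    rcases le_or_gt 0 (M i j) with h | h
    · have he : x i * (M i j * x j) = M i j * (x i * x j) := by ring
      rw [he, abs_of_nonneg h]
      exact mul_le_mul_of_nonneg_left habs h
    · have he : x i * (M i j * x j) = M i j * (x i * x j) := by ring
      rw [he, abs_of_neg h]
      nlinarith
  calc x ⬝ᵥ M *ᵥ x = ∑ i, ∑ j, x i * (M i j * x j) := by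
        simp only [dotProduct, mulVec, Finset.mul_sum]
    _ ≤ ∑ i, ∑ j, |M i j| * (x ⬝ᵥ x) :=
        Finset.sum_le_sum fun i _ => Finset.sum_le_sum fun j _ => key i j
    _ = (∑ i, ∑ j, |M i j|) * (x ⬝ᵥ x) := by
        rw [Finset.sum_mul]; exact Finset.sum_congr rfl fun i _ => (Finset.sum_mul _ _ _).symm

set_option maxHeartbeats 1000000 in
lemma psd_sq_le {d : ℕ} {M : Matrix (Fin d) (Fin d) ℝ} (hM : M.PosSemidef) {μ : ℝ}
    (hμ : ∀ x, x ⬝ᵥ M *ᵥ x ≤ μ * (x ⬝ᵥ x)) (y : Fin d → ℝ) :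
    y ⬝ᵥ (M * M) *ᵥ y ≤ μ * (y ⬝ᵥ M *ᵥ y) := by
  obtain ⟨N, hNpsd, hNN⟩ : ∃ N : Matrix (Fin d) (Fin d) ℝ, N.PosSemidef ∧ N * N = M :=
    by open scoped MatrixOrder in
      exact ⟨CFC.sqrt M, (CFC.sqrt_nonneg M).posSemidef, CFC.sqrt_mul_sqrt_self M hM.nonneg⟩
  have hNH : Nᴴ = N := hNpsd.1
  have hP : (μ • (1 : Matrix (Fin d) (Fin d) ℝ) - M).PosSemidef := by
    refine PosSemidef.of_dotProduct_mulVec_nonneg ?_ ?_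
    · have h1 : (μ • (1 : Matrix (Fin d) (Fin d) ℝ)).IsHermitian := by
        simp [Matrix.IsHermitian, conjTranspose_smul]
      exact h1.sub hM.1
    · intro x
      have := hμ x
      simp only [star_trivial, sub_mulVec, dotProduct_sub, smul_mulVec, one_mulVec,
        dotProduct_smul, smul_eq_mul]
      linarith
  have hconj : (N * (μ • (1 : Matrix (Fin d) (Fin d) ℝ) - M) * Nᴴ).PosSemidef :=
    hP.mul_mul_conjTranspose_same N
  rw [hNH] at hconj
  have h2 : N * M * N = M * M := by rw [← hNN]; simp only [Matrix.mul_assoc]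
  have heq : N * (μ • (1 : Matrix (Fin d) (Fin d) ℝ) - M) * N = μ • M - M * M := by
    rw [Matrix.mul_sub, Matrix.sub_mul, mul_smul_comm, smul_mul_assoc, Matrix.mul_one, hNN, h2]
  rw [heq] at hconj
  have h3 := hconj.dotProduct_mulVec_nonneg y
  simp only [star_trivial, sub_mulVec, dotProduct_sub, smul_mulVec, dotProduct_smul,
    smul_eq_mul] at h3
  linarith

set_option maxHeartbeats 2000000 in
/-- Mixed time-scale contraction: let `A, B` be symmetric PSD matrices mapping a
subspace `S` into itself with the Lyapunov condition `yᵀ((β₀/α₀)B + A)y ≥ c₁‖y‖²`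
on `S` (here `β₀/α₀ = b/a`), and let `α_t = a/(t+1)`, `β_t = b/(t+1)^{δ₁}` with
`0 < δ₁ < 1`. Then there are `c > 0` and `t₀` such that for all `t ≥ t₀` and all
`y ∈ S`: `‖(I - β_t B - α_t A) y‖ ≤ (1 - c α_t) ‖y‖`. -/
theorem mixed_timescale_contraction
    (d : ℕ) (A B : Matrix (Fin d) (Fin d) ℝ)
    (hA : A.PosSemidef) (hB : B.PosSemidef)
    (S : Submodule ℝ (Fin d → ℝ))
    (hAS : ∀ y ∈ S, A *ᵥ y ∈ S) (hBS : ∀ y ∈ S, B *ᵥ y ∈ S)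
    (a b c₁ δ₁ : ℝ) (ha : 0 < a) (hb : 0 < b) (hc₁ : 0 < c₁)
    (hδ₁ : 0 < δ₁) (hδ₁' : δ₁ < 1)
    (hLyap : ∀ y ∈ S, c₁ * (∑ i, (y i) ^ 2) ≤ y ⬝ᵥ ((((b / a) • B + A)) *ᵥ y)) :
    ∃ c : ℝ, 0 < c ∧ ∃ t₀ : ℕ, ∀ t : ℕ, t₀ ≤ t → ∀ y ∈ S,
      ∑ i, ((((1 : Matrix (Fin d) (Fin d) ℝ)
          - (b / ((t : ℝ) + 1) ^ δ₁) • B - (a / ((t : ℝ) + 1)) • A) *ᵥ y) i) ^ 2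
        ≤ (1 - c * (a / ((t : ℝ) + 1))) ^ 2 * ∑ i, (y i) ^ 2 := by
  classical
  set Cb := ∑ i, ∑ j, |B i j| with hCb
  set Ca := ∑ i, ∑ j, |A i j| with hCa
  have hCb0 : 0 ≤ Cb := Finset.sum_nonneg fun i _ => Finset.sum_nonneg fun j _ => abs_nonneg _
  have hCa0 : 0 ≤ Ca := Finset.sum_nonneg fun i _ => Finset.sum_nonneg fun j _ => abs_nonneg _
  -- find t₀ with small coefficients
  have htend : Tendsto (fun t : ℕ =>
      b * Cb / ((t : ℝ) + 1) ^ δ₁ + a * Ca / ((t : ℝ) + 1)) atTop (nhds 0) := by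
    have hbase : Tendsto (fun t : ℕ => (t : ℝ) + 1) atTop atTop :=
      tendsto_atTop_add_const_right atTop 1 tendsto_natCast_atTop_atTop
    have h1 : Tendsto (fun t : ℕ => ((t : ℝ) + 1) ^ δ₁) atTop atTop :=
      (tendsto_rpow_atTop hδ₁).comp hbase
    have t1 : Tendsto (fun t : ℕ => b * Cb / ((t : ℝ) + 1) ^ δ₁) atTop (nhds 0) :=
      Tendsto.div_atTop tendsto_const_nhds h1
    have t2 : Tendsto (fun t : ℕ => a * Ca / ((t : ℝ) + 1)) atTop (nhds 0) :=
      Tendsto.div_atTop tendsto_const_nhds hbase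
    simpa using t1.add t2
  have hev : ∀ᶠ t : ℕ in atTop,
      b * Cb / ((t : ℝ) + 1) ^ δ₁ + a * Ca / ((t : ℝ) + 1) ≤ 1 :=
    htend.eventually (eventually_le_nhds one_pos)
  obtain ⟨t₀, ht₀⟩ := eventually_atTop.mp hev
  refine ⟨c₁ / 2, by positivity, t₀, ?_⟩
  intro t ht y hy
  have hpos : (0:ℝ) < (t : ℝ) + 1 := by positivity
  have hpow : (0:ℝ) < ((t : ℝ) + 1) ^ δ₁ := Real.rpow_pos_of_pos hpos δ₁
  set βt := b / ((t : ℝ) + 1) ^ δ₁ with hβt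
  set αt := a / ((t : ℝ) + 1) with hαt
  have hβpos : 0 < βt := div_pos hb hpow
  have hαpos : 0 < αt := div_pos ha hpos
  set M := βt • B + αt • A with hMdef
  -- dot product form
  have hdp : ∀ v : Fin d → ℝ, ∑ i, (v i) ^ 2 = v ⬝ᵥ v := by
    intro v; simp only [dotProduct, sq]
  set Sq := y ⬝ᵥ y with hSq
  have hSq0 : 0 ≤ Sq := by
    rw [hSq]; exact Finset.sum_nonneg fun i _ => mul_self_nonneg _
  -- M is PSD
  have hMpsd : M.PosSemidef := by
    refine PosSemidef.of_dotProduct_mulVec_nonneg ?_ ?_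
    · have : Mᴴ = M := by
        rw [hMdef]
        have hBt : Bᵀ = B := by simpa using hB.1.eq
        have hAt : Aᵀ = A := by simpa using hA.1.eq
        simp [conjTranspose_add, conjTranspose_smul, hBt, hAt]
      exact this
    · intro x
      have h1 := hB.dotProduct_mulVec_nonneg x
      have h2 := hA.dotProduct_mulVec_nonneg x
      simp only [star_trivial] at h1 h2 ⊢
      rw [hMdef]
      simp only [add_mulVec, smul_mulVec, dotProduct_add, dotProduct_smul, smul_eq_mul]
      exact add_nonneg (mul_nonneg hβpos.le h1) (mul_nonneg hαpos.le h2)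
  -- quadratic form expansion at y
  have hqB : 0 ≤ y ⬝ᵥ B *ᵥ y := by simpa using hB.dotProduct_mulVec_nonneg y
  have hqA : 0 ≤ y ⬝ᵥ A *ᵥ y := by simpa using hA.dotProduct_mulVec_nonneg y
  set q := y ⬝ᵥ M *ᵥ y with hq
  have hqexp : q = βt * (y ⬝ᵥ B *ᵥ y) + αt * (y ⬝ᵥ A *ᵥ y) := by
    rw [hq, hMdef]
    simp only [add_mulVec, smul_mulVec, dotProduct_add, dotProduct_smul, smul_eq_mul]
  have hq0 : 0 ≤ q := by
    rw [hqexp]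
    exact add_nonneg (mul_nonneg hβpos.le hqB) (mul_nonneg hαpos.le hqA)
  -- lower bound on q
  have hβα : αt * (b / a) ≤ βt := by
    rw [hβt, hαt]
    have hle : ((t : ℝ) + 1) ^ δ₁ ≤ (t : ℝ) + 1 := by
      have h1 : (1:ℝ) ≤ (t : ℝ) + 1 := by
        have := Nat.cast_nonneg (α := ℝ) t; linarith
      calc ((t : ℝ) + 1) ^ δ₁ ≤ ((t : ℝ) + 1) ^ (1:ℝ) :=
            Real.rpow_le_rpow_of_exponent_le h1 hδ₁'.le
        _ = (t : ℝ) + 1 := Real.rpow_one _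
    have : a / ((t : ℝ) + 1) * (b / a) = b / ((t : ℝ) + 1) := by
      field_simp
    rw [this]
    exact div_le_div_of_nonneg_left hb.le hpow hle
  have hlower : αt * (c₁ * Sq) ≤ q := by
    have hL := hLyap y hy
    rw [hdp y, ← hSq] at hL
    have hLexp : y ⬝ᵥ (((b / a) • B + A)) *ᵥ y
        = (b / a) * (y ⬝ᵥ B *ᵥ y) + y ⬝ᵥ A *ᵥ y := by
      simp only [add_mulVec, smul_mulVec, dotProduct_add, dotProduct_smul, smul_eq_mul]
    rw [hLexp] at hL
    have step : αt * (c₁ * Sq) ≤ αt * ((b / a) * (y ⬝ᵥ B *ᵥ y) + y ⬝ᵥ A *ᵥ y) :=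
      mul_le_mul_of_nonneg_left hL hαpos.le
    rw [hqexp]
    nlinarith [mul_le_mul_of_nonneg_right hβα hqB]
  -- upper bound on the quadratic form of M globally
  set μ := βt * Cb + αt * Ca with hμdef
  have hμub : ∀ x, x ⬝ᵥ M *ᵥ x ≤ μ * (x ⬝ᵥ x) := by
    intro x
    have h1 := quad_ub M x
    have hxx : (0:ℝ) ≤ x ⬝ᵥ x := Finset.sum_nonneg fun i _ => mul_self_nonneg _
    have hentry : (∑ i, ∑ j, |M i j|) ≤ μ := by
      rw [hμdef, hCb, hCa, Finset.mul_sum, Finset.mul_sum, ← Finset.sum_add_distrib]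
      refine Finset.sum_le_sum fun i _ => ?_
      rw [Finset.mul_sum, Finset.mul_sum, ← Finset.sum_add_distrib]
      refine Finset.sum_le_sum fun j _ => ?_
      have : M i j = βt * B i j + αt * A i j := by
        rw [hMdef]; simp [Matrix.add_apply, Matrix.smul_apply, smul_eq_mul]
      rw [this]
      calc |βt * B i j + αt * A i j| ≤ |βt * B i j| + |αt * A i j| := abs_add_le _ _
        _ = βt * |B i j| + αt * |A i j| := by
            rw [abs_mul, abs_mul, abs_of_pos hβpos, abs_of_pos hαpos]
    calc x ⬝ᵥ M *ᵥ x ≤ (∑ i, ∑ j, |M i j|) * (x ⬝ᵥ x) := h1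
      _ ≤ μ * (x ⬝ᵥ x) := mul_le_mul_of_nonneg_right hentry hxx
  have hsq := psd_sq_le hMpsd hμub y
  -- μ ≤ 1
  have hμ1 : μ ≤ 1 := by
    have := ht₀ t ht
    rw [hμdef, hβt, hαt]
    calc b / ((t : ℝ) + 1) ^ δ₁ * Cb + a / ((t : ℝ) + 1) * Ca
        = b * Cb / ((t : ℝ) + 1) ^ δ₁ + a * Ca / ((t : ℝ) + 1) := by ring
      _ ≤ 1 := this
  -- expansion of the LHS
  have hmat : (1 : Matrix (Fin d) (Fin d) ℝ) - βt • B - αt • A = 1 - M := by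
    rw [hMdef, sub_sub]
  have hzdef : ((1 : Matrix (Fin d) (Fin d) ℝ) - βt • B - αt • A) *ᵥ y = y - M *ᵥ y := by
    rw [hmat, sub_mulVec, one_mulVec]
  have hMM : (M *ᵥ y) ⬝ᵥ (M *ᵥ y) = y ⬝ᵥ (M * M) *ᵥ y := by
    have hsymm : Mᵀ = M := hMpsd.1
    calc (M *ᵥ y) ⬝ᵥ (M *ᵥ y) = ((M *ᵥ y) ᵥ* M) ⬝ᵥ y := dotProduct_mulVec _ _ _
      _ = (Mᵀ *ᵥ (M *ᵥ y)) ⬝ᵥ y := by rw [← mulVec_transpose]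
      _ = ((Mᵀ * M) *ᵥ y) ⬝ᵥ y := by rw [mulVec_mulVec]
      _ = y ⬝ᵥ (M * M) *ᵥ y := by rw [hsymm, dotProduct_comm]
  have hexp : (y - M *ᵥ y) ⬝ᵥ (y - M *ᵥ y) = Sq - 2 * q + y ⬝ᵥ (M * M) *ᵥ y := by
    rw [sub_dotProduct, dotProduct_sub, dotProduct_sub, hMM,
      dotProduct_comm (M *ᵥ y) y]
    rw [hSq, hq]; ring
  rw [hdp, hzdef, hexp, hdp y, ← hSq]
  -- final arithmetic
  have hr : y ⬝ᵥ (M * M) *ᵥ y ≤ q := le_trans hsq (by nlinarith)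
  nlinarith [sq_nonneg (c₁ * αt), mul_nonneg (mul_nonneg (mul_nonneg hc₁.le hc₁.le)
    (mul_nonneg hαpos.le hαpos.le)) hSq0]
end

section
/- Let {z_t} be a nonnegative adapted process satisfying z_{t+1} ≤ (1 - r₁(t)) z_t + r₂(t) U_t (1 + J_t), where {r₁(t)} is adapted with 0 ≤ r₁(t) ≤ 1 and a₁ ≤ (t+1)^{δ₁} E[r₁(t) | F_t] ≤ 1 for a₁ > 0 and 0 ≤ δ₁ < 1; r₂(t) ≤ a₂/(t+1)^{δ₂} deterministic with a₂, δ₂ > 0; {U_t} adapted with sup_t U_t < ∞ a.s.; and {J_t} i.i.d. nonnegative, J_t independent of F_t, with E[J_t^{2+ε₁}] < ∞ for some ε₁ > 0. Then for every δ₀ with 0 ≤ δ₀ < δ₂ - δ₁ - 1/(2+ε₁), (t+1)^{δ₀} z_t → 0 almost surely. -/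
open MeasureTheory Filter ProbabilityTheory Finset

set_option maxHeartbeats 2000000

section AdaptedRecursionAux

variable {Ω : Type*}

/-- The product `∏_{u=s}^{t-1} (1 - r₁ u ω)`. -/
noncomputable def adQp (r₁ : ℕ → Ω → ℝ) (s t : ℕ) (ω : Ω) : ℝ :=
  ∏ u ∈ Finset.Ico s t, (1 - r₁ u ω)

variable {r₁ : ℕ → Ω → ℝ}

lemma adQp_nonneg (hb : ∀ u ω, 0 ≤ r₁ u ω ∧ r₁ u ω ≤ 1) (s t : ℕ) (ω : Ω) :
    0 ≤ adQp r₁ s t ω :=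
  Finset.prod_nonneg fun u _ => by linarith [(hb u ω).2]

lemma adQp_le_one (hb : ∀ u ω, 0 ≤ r₁ u ω ∧ r₁ u ω ≤ 1) (s t : ℕ) (ω : Ω) :
    adQp r₁ s t ω ≤ 1 :=
  Finset.prod_le_one (fun u _ => by linarith [(hb u ω).2])
    (fun u _ => by linarith [(hb u ω).1])

lemma adQp_succ {s t : ℕ} (h : s ≤ t) (ω : Ω) :
    adQp r₁ s (t + 1) ω = adQp r₁ s t ω * (1 - r₁ t ω) :=
  Finset.prod_Ico_succ_top h _

lemma adQp_self (s : ℕ) (ω : Ω) : adQp r₁ s s ω = 1 := by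
  simp [adQp]

lemma adQp_mono (hb : ∀ u ω, 0 ≤ r₁ u ω ∧ r₁ u ω ≤ 1) {s s' t : ℕ}
    (h : s ≤ s') (h' : s' ≤ t) (ω : Ω) :
    adQp r₁ s t ω ≤ adQp r₁ s' t ω := by
  have hsplit : adQp r₁ s t ω = adQp r₁ s s' ω * adQp r₁ s' t ω :=
    (Finset.prod_Ico_consecutive _ h h').symm
  rw [hsplit]
  exact mul_le_of_le_one_left (adQp_nonneg hb _ _ _) (adQp_le_one hb _ _ _)

lemma ad_summable_rpow_neg {r : ℝ} (hr : 1 < r) :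
    Summable (fun t : ℕ => ((t : ℝ) + 1) ^ (-r)) := by
  have h := (Real.summable_nat_rpow_inv.2 hr)
  have h2 := (summable_nat_add_iff 1).2 h
  refine h2.congr fun t => ?_
  rw [Real.rpow_neg (by positivity : (0:ℝ) ≤ (t : ℝ) + 1)]
  push_cast
  ring_nf

lemma ad_tendsto_rpow_neg (A : ℝ) {c : ℝ} (hc : 0 < c) :
    Tendsto (fun t : ℕ => A * ((t : ℝ) + 1) ^ (-c)) atTop (nhds 0) := by
  have h1 : Tendsto (fun t : ℕ => ((t : ℝ) + 1)) atTop atTop :=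
    tendsto_atTop_add_const_right _ _ tendsto_natCast_atTop_atTop
  have h2 := (tendsto_rpow_neg_atTop hc).comp h1
  simpa using h2.const_mul A

lemma ad_log_le_rpow {c : ℝ} (hc : 0 < c) (hc1 : c ≤ 1) (t : ℕ) :
    Real.log ((t : ℝ) + 2) ≤ (2 / c) * ((t : ℝ) + 1) ^ c := by
  have h2 : (0:ℝ) < (t : ℝ) + 2 := by positivity
  have h1 : (0:ℝ) < (t : ℝ) + 1 := by positivity
  have key : Real.log ((t : ℝ) + 2) = (1 / c) * Real.log (((t : ℝ) + 2) ^ c) := by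
    rw [Real.log_rpow h2]; field_simp
  have h3 : ((t : ℝ) + 2) ^ c ≤ 2 * ((t : ℝ) + 1) ^ c := by
    have hle : ((t : ℝ) + 2) ≤ 2 * ((t : ℝ) + 1) := by linarith
    calc ((t : ℝ) + 2) ^ c ≤ (2 * ((t : ℝ) + 1)) ^ c := Real.rpow_le_rpow h2.le hle hc.le
      _ = 2 ^ c * ((t : ℝ) + 1) ^ c := Real.mul_rpow (by norm_num) h1.le
      _ ≤ 2 * ((t : ℝ) + 1) ^ c := by
          have h4 : (2:ℝ) ^ c ≤ 2 ^ (1:ℝ) :=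
            Real.rpow_le_rpow_of_exponent_le (by norm_num) hc1
          rw [Real.rpow_one] at h4
          exact mul_le_mul_of_nonneg_right h4 (Real.rpow_nonneg h1.le c)
  have h5 : Real.log (((t : ℝ) + 2) ^ c) ≤ ((t : ℝ) + 2) ^ c := by
    have := Real.log_le_sub_one_of_pos (Real.rpow_pos_of_pos h2 c)
    linarith
  calc Real.log ((t : ℝ) + 2) = (1 / c) * Real.log (((t : ℝ) + 2) ^ c) := key
    _ ≤ (1 / c) * (2 * ((t : ℝ) + 1) ^ c) := by
        apply mul_le_mul_of_nonneg_left (h5.trans h3) (by positivity)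
    _ = (2 / c) * ((t : ℝ) + 1) ^ c := by ring

end AdaptedRecursionAux

/-- Lemma on adapted stochastic recursions: if the nonnegative adapted process
`z_t` satisfies `z_{t+1} ≤ (1 - r₁(t)) z_t + r₂(t) U_t (1 + J_t)` with
`a₁ ≤ (t+1)^{δ₁} E[r₁(t)|F_t] ≤ 1`, `0 ≤ r₂(t) ≤ a₂/(t+1)^{δ₂}`, `U_t` adapted
and a.s. bounded, and `J_t` i.i.d. nonnegative, independent of `F_t`, with
`E[J_t^{2+ε₁}] < ∞`, then `(t+1)^{δ₀} z_t → 0` a.s. for every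
`0 ≤ δ₀ < δ₂ - δ₁ - 1/(2+ε₁)`. -/
theorem adapted_recursion_pathwise_decay
    {Ω : Type*} {m : MeasurableSpace Ω} (μ : Measure Ω) [IsProbabilityMeasure μ]
    (ℱ : Filtration ℕ m)
    (z U r₁ J : ℕ → Ω → ℝ) (r₂ : ℕ → ℝ)
    (a₁ a₂ δ₁ δ₂ ε₁ : ℝ)
    (hz_nonneg : ∀ t ω, 0 ≤ z t ω)
    (hz_adapted : Adapted ℱ z)
    (hU_nonneg : ∀ t ω, 0 ≤ U t ω)
    (hU_adapted : Adapted ℱ U)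
    (hU_bdd : ∀ᵐ ω ∂μ, BddAbove (Set.range fun t => U t ω))
    (hr₁_meas : ∀ t, StronglyMeasurable[ℱ (t + 1)] (r₁ t))
    (hr₁_bnd : ∀ t ω, 0 ≤ r₁ t ω ∧ r₁ t ω ≤ 1)
    (ha₁ : 0 < a₁) (hδ₁0 : 0 ≤ δ₁) (hδ₁1 : δ₁ < 1)
    (hr₁_cond : ∀ t : ℕ, ∀ᵐ ω ∂μ,
      a₁ ≤ ((t : ℝ) + 1) ^ δ₁ * (μ[r₁ t | ℱ t]) ω ∧
        ((t : ℝ) + 1) ^ δ₁ * (μ[r₁ t | ℱ t]) ω ≤ 1)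
    (ha₂ : 0 < a₂) (hδ₂ : 0 < δ₂)
    (hr₂_nonneg : ∀ t, 0 ≤ r₂ t)
    (hr₂ : ∀ t : ℕ, r₂ t ≤ a₂ / ((t : ℝ) + 1) ^ δ₂)
    (hJ_nonneg : ∀ t ω, 0 ≤ J t ω)
    (hJ_meas : ∀ t, Measurable (J t))
    (hJ_ident : ∀ t, μ.map (J t) = μ.map (J 0))
    (hJ_indep : ∀ t, Indep (MeasurableSpace.comap (J t) inferInstance) (ℱ t) μ)
    (hε₁ : 0 < ε₁)
    (hJ_mom : Integrable (fun ω => (J 0 ω) ^ ((2 : ℝ) + ε₁)) μ)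
    (hrec : ∀ t : ℕ, ∀ᵐ ω ∂μ,
      z (t + 1) ω ≤ (1 - r₁ t ω) * z t ω + r₂ t * U t ω * (1 + J t ω)) :
    ∀ δ₀ : ℝ, 0 ≤ δ₀ → δ₀ < δ₂ - δ₁ - 1 / (2 + ε₁) →
      ∀ᵐ ω ∂μ, Tendsto (fun t : ℕ => ((t : ℝ) + 1) ^ δ₀ * z t ω) atTop (nhds 0) := by
  -- basic facts
  have hae : (MeasureTheory.ae μ).NeBot := ae_neBot.2 (IsProbabilityMeasure.ne_zero μ)
  have ha₁1 : a₁ ≤ 1 := by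
    obtain ⟨ω, h1, h2⟩ := (hr₁_cond 0).exists
    exact h1.trans h2
  have hp0 : (0:ℝ) < 2 + ε₁ := by linarith
  intro δ₀ hδ₀0 hδ₀gap
  have hgap : 0 < δ₂ - δ₁ - δ₀ - 1 / (2 + ε₁) := by linarith
  obtain ⟨η, hη0, hη12, hη2⟩ :
      ∃ η : ℝ, 0 < η ∧ η ≤ 1 / 2 ∧ 2 * η ≤ δ₂ - δ₁ - δ₀ - 1 / (2 + ε₁) := by
    refine ⟨min 1 (δ₂ - δ₁ - δ₀ - 1 / (2 + ε₁)) / 2, ?_, ?_, ?_⟩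
    · have := lt_min one_pos hgap; linarith
    · have := min_le_left 1 (δ₂ - δ₁ - δ₀ - 1 / (2 + ε₁)); linarith
    · have := min_le_right 1 (δ₂ - δ₁ - δ₀ - 1 / (2 + ε₁)); linarith
  set q : ℝ := 1 / (2 + ε₁) + η with hq_def
  have hq0 : 0 < q := by
    have h : 0 < 1 / (2 + ε₁) := by positivity
    simp only [hq_def]; linarith
  have hqp : 1 < q * (2 + ε₁) := by
    have he : (1 / (2 + ε₁)) * (2 + ε₁) = 1 := by field_simp
    have h2 : q * (2 + ε₁) = 1 + η * (2 + ε₁) := by rw [hq_def, add_mul, he]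
    have h3 := mul_pos hη0 hp0
    linarith
  have hβ : δ₀ + δ₁ + η ≤ δ₂ - q := by simp only [hq_def]; linarith
  have hβ0 : 0 < δ₂ - q := by linarith
  set C₂ : ℝ := (δ₀ + 4) / a₁ with hC₂_def
  have hC₂0 : 0 < C₂ := by positivity
  have ha₁C₂ : a₁ * C₂ = δ₀ + 4 := by rw [hC₂_def]; field_simp
  obtain ⟨c₁, hc₁0, hc₁1, hc₁η, hθ1⟩ :
      ∃ c₁ : ℝ, 0 < c₁ ∧ c₁ ≤ 1 ∧ c₁ ≤ η / 2 ∧ δ₁ + c₁ < 1 := by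
    refine ⟨min (η / 2) ((1 - δ₁) / 2), ?_, ?_, min_le_left _ _, ?_⟩
    · exact lt_min (by linarith) (by linarith)
    · have := min_le_left (η / 2) ((1 - δ₁) / 2); linarith
    · have := min_le_right (η / 2) ((1 - δ₁) / 2); linarith
  -- window size
  set w : ℕ → ℕ := fun t => ⌈C₂ * ((t : ℝ) + 1) ^ δ₁ * Real.log ((t : ℝ) + 2)⌉₊ + 1
    with hw_def
  set sσ : ℕ → ℕ := fun t => t - w t with hsσ_def
  have hxw_nonneg : ∀ t : ℕ, 0 ≤ C₂ * ((t : ℝ) + 1) ^ δ₁ * Real.log ((t : ℝ) + 2) := by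
    intro t
    have h1 : (0:ℝ) ≤ Real.log ((t : ℝ) + 2) := Real.log_nonneg (by push_cast; linarith)
    have h2 : (0:ℝ) ≤ ((t : ℝ) + 1) ^ δ₁ := Real.rpow_nonneg (by positivity) _
    positivity
  have hw_lb : ∀ t : ℕ, C₂ * ((t : ℝ) + 1) ^ δ₁ * Real.log ((t : ℝ) + 2) ≤ (w t : ℝ) := by
    intro t
    have h := Nat.le_ceil (C₂ * ((t : ℝ) + 1) ^ δ₁ * Real.log ((t : ℝ) + 2))
    simp only [hw_def]
    push_cast
    linarith
  have hw_ub2 : ∀ t : ℕ, (w t : ℝ) ≤ (2 * C₂ / c₁) * ((t : ℝ) + 1) ^ (δ₁ + c₁) + 2 := by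
    intro t
    have hw_ub : (w t : ℝ) ≤ C₂ * ((t : ℝ) + 1) ^ δ₁ * Real.log ((t : ℝ) + 2) + 2 := by
      have h := Nat.ceil_lt_add_one (hxw_nonneg t)
      simp only [hw_def]
      push_cast
      linarith
    have h1 : (0:ℝ) < (t : ℝ) + 1 := by positivity
    have hlog := ad_log_le_rpow hc₁0 hc₁1 t
    have h2 : (0:ℝ) ≤ C₂ * ((t : ℝ) + 1) ^ δ₁ := by
      have := Real.rpow_nonneg h1.le δ₁
      positivity
    have h3 : C₂ * ((t : ℝ) + 1) ^ δ₁ * Real.log ((t : ℝ) + 2)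
        ≤ C₂ * ((t : ℝ) + 1) ^ δ₁ * ((2 / c₁) * ((t : ℝ) + 1) ^ c₁) :=
      mul_le_mul_of_nonneg_left hlog h2
    have h4 : C₂ * ((t : ℝ) + 1) ^ δ₁ * ((2 / c₁) * ((t : ℝ) + 1) ^ c₁)
        = (2 * C₂ / c₁) * ((t : ℝ) + 1) ^ (δ₁ + c₁) := by
      rw [Real.rpow_add h1]; ring
    linarith [h3.trans_eq h4]
  -- eventually the window is at most t/2
  have hE_w : ∀ᶠ t : ℕ in atTop, (w t : ℝ) ≤ (t : ℝ) / 2 := by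
    have hten : Tendsto (fun t : ℕ =>
        (2 * C₂ / c₁) * ((t : ℝ) + 1) ^ (-(1 - (δ₁ + c₁))) + 2 * ((t : ℝ) + 1) ^ (-(1:ℝ)))
        atTop (nhds 0) := by
      have h1 := ad_tendsto_rpow_neg (2 * C₂ / c₁) (by linarith : (0:ℝ) < 1 - (δ₁ + c₁))
      have h2 := ad_tendsto_rpow_neg (2:ℝ) one_pos
      simpa using h1.add h2
    have hev := hten.eventually (gt_mem_nhds (by norm_num : (0:ℝ) < 1 / 4))
    filter_upwards [hev, eventually_ge_atTop 2] with t h14 ht2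
    have h1 : (0:ℝ) < (t : ℝ) + 1 := by positivity
    have ht2R : (2:ℝ) ≤ (t : ℝ) := by exact_mod_cast ht2
    have e2 : ((t : ℝ) + 1) * ((t : ℝ) + 1) ^ (-(1 - (δ₁ + c₁)))
        = ((t : ℝ) + 1) ^ (δ₁ + c₁) := by
      have h5 : ((t : ℝ) + 1) ^ ((1:ℝ) + -(1 - (δ₁ + c₁)))
          = ((t : ℝ) + 1) ^ (1:ℝ) * ((t : ℝ) + 1) ^ (-(1 - (δ₁ + c₁))) :=
        Real.rpow_add h1 _ _
      rw [Real.rpow_one] at h5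
      rw [← h5, show (1:ℝ) + -(1 - (δ₁ + c₁)) = δ₁ + c₁ from by ring]
    have e3 : ((t : ℝ) + 1) * ((t : ℝ) + 1) ^ (-(1:ℝ)) = 1 := by
      rw [Real.rpow_neg_one]
      exact mul_inv_cancel₀ h1.ne'
    have e1 : ((t : ℝ) + 1) * ((2 * C₂ / c₁) * ((t : ℝ) + 1) ^ (-(1 - (δ₁ + c₁)))
        + 2 * ((t : ℝ) + 1) ^ (-(1:ℝ)))
        = (2 * C₂ / c₁) * ((t : ℝ) + 1) ^ (δ₁ + c₁) + 2 := by
      calc ((t : ℝ) + 1) * ((2 * C₂ / c₁) * ((t : ℝ) + 1) ^ (-(1 - (δ₁ + c₁)))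
            + 2 * ((t : ℝ) + 1) ^ (-(1:ℝ)))
          = (2 * C₂ / c₁) * (((t : ℝ) + 1) * ((t : ℝ) + 1) ^ (-(1 - (δ₁ + c₁))))
            + 2 * (((t : ℝ) + 1) * ((t : ℝ) + 1) ^ (-(1:ℝ))) := by ring
        _ = (2 * C₂ / c₁) * ((t : ℝ) + 1) ^ (δ₁ + c₁) + 2 := by rw [e2, e3]; ring
    have h6 : ((t : ℝ) + 1) * ((2 * C₂ / c₁) * ((t : ℝ) + 1) ^ (-(1 - (δ₁ + c₁)))
        + 2 * ((t : ℝ) + 1) ^ (-(1:ℝ))) ≤ ((t : ℝ) + 1) * (1 / 4) :=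
      mul_le_mul_of_nonneg_left h14.le h1.le
    rw [e1] at h6
    have h7 := hw_ub2 t
    linarith
  -- measurability and integrability
  have hr₁_sm : ∀ t : ℕ, StronglyMeasurable (r₁ t) := fun t => (hr₁_meas t).mono (ℱ.le (t+1))
  have hr₁_int : ∀ t : ℕ, Integrable (r₁ t) μ := by
    intro t
    refine Integrable.mono' (integrable_const 1) (hr₁_sm t).aestronglyMeasurable
      (ae_of_all _ fun ω => ?_)
    rw [Real.norm_eq_abs, abs_le]
    exact ⟨by linarith [(hr₁_bnd t ω).1], (hr₁_bnd t ω).2⟩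
  have hQp_sm : ∀ s t : ℕ, StronglyMeasurable[ℱ t] (adQp r₁ s t) := by
    intro s t
    show StronglyMeasurable[ℱ t] fun ω => ∏ u ∈ Finset.Ico s t, (1 - r₁ u ω)
    exact Finset.stronglyMeasurable_fun_prod _ (fun u hu =>
      stronglyMeasurable_const.sub ((hr₁_meas u).mono (ℱ.mono (Finset.mem_Ico.1 hu).2)))
  have hQp_int : ∀ s t : ℕ, Integrable (adQp r₁ s t) μ := by
    intro s t
    refine Integrable.mono' (integrable_const 1)
      ((hQp_sm s t).mono (ℱ.le t)).aestronglyMeasurable (ae_of_all _ fun ω => ?_)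
    rw [Real.norm_eq_abs, abs_of_nonneg (adQp_nonneg hr₁_bnd s t ω)]
    exact adQp_le_one hr₁_bnd s t ω
  have hcond_bnd : ∀ t : ℕ, ∀ᵐ ω ∂μ,
      a₁ * ((t : ℝ) + 1) ^ (-δ₁) ≤ (μ[r₁ t|ℱ t]) ω := by
    intro t
    filter_upwards [hr₁_cond t] with ω h
    have h1 : (0:ℝ) < ((t : ℝ) + 1) ^ δ₁ := Real.rpow_pos_of_pos (by positivity) _
    rw [Real.rpow_neg (by positivity : (0:ℝ) ≤ (t:ℝ)+1), ← div_eq_mul_inv, div_le_iff₀ h1]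
    calc a₁ ≤ ((t : ℝ) + 1) ^ δ₁ * (μ[r₁ t|ℱ t]) ω := h.1
      _ = (μ[r₁ t|ℱ t]) ω * ((t : ℝ) + 1) ^ δ₁ := mul_comm _ _
  have hfac : ∀ u : ℕ, a₁ * ((u : ℝ) + 1) ^ (-δ₁) ≤ 1 := by
    intro u
    have h1u : (0:ℝ) < (u:ℝ) + 1 := by positivity
    have h3 : ((u : ℝ) + 1) ^ (-δ₁) ≤ 1 :=
      Real.rpow_le_one_of_one_le_of_nonpos (by linarith) (by linarith)
    have h4 : (0:ℝ) ≤ ((u : ℝ) + 1) ^ (-δ₁) := Real.rpow_nonneg h1u.le _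
    calc a₁ * ((u : ℝ) + 1) ^ (-δ₁) ≤ 1 * 1 := mul_le_mul ha₁1 h3 h4 zero_le_one
      _ = 1 := mul_one 1
  -- expectation bound on the window products
  have hEQ : ∀ s t : ℕ, s ≤ t → (∫ ω, adQp r₁ s t ω ∂μ)
      ≤ ∏ u ∈ Finset.Ico s t, (1 - a₁ * ((u : ℝ) + 1) ^ (-δ₁)) := by
    intro s t hst
    induction t, hst using Nat.le_induction with
    | base => simp [adQp_self]
    | succ t hst ih =>
      have h1t : (0:ℝ) < (t : ℝ) + 1 := by positivity
      have hfac0 : 0 ≤ 1 - a₁ * ((t : ℝ) + 1) ^ (-δ₁) := by linarith [hfac t]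
      set g : Ω → ℝ := fun ω => 1 - r₁ t ω with hg_def
      have hg_int : Integrable g μ := (integrable_const 1).sub (hr₁_int t)
      have hfg_int : Integrable (adQp r₁ s t * g) μ := by
        refine Integrable.mono' (integrable_const 1) ?_ (ae_of_all _ fun ω => ?_)
        · exact (((hQp_sm s t).mono (ℱ.le t)).mul
            (stronglyMeasurable_const.sub (hr₁_sm t))).aestronglyMeasurable
        · have hq0' := adQp_nonneg hr₁_bnd s t ω
          have hq1' := adQp_le_one hr₁_bnd s t ω
          have hb0 := (hr₁_bnd t ω).1
          have hb1 := (hr₁_bnd t ω).2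
          have hgw : g ω = 1 - r₁ t ω := rfl
          rw [Pi.mul_apply, Real.norm_eq_abs, abs_mul, abs_of_nonneg hq0', hgw,
            abs_of_nonneg (by linarith : (0:ℝ) ≤ 1 - r₁ t ω)]
          calc adQp r₁ s t ω * (1 - r₁ t ω) ≤ 1 * 1 :=
                mul_le_mul hq1' (by linarith) (by linarith) zero_le_one
            _ = 1 := mul_one 1
      have hpull : μ[adQp r₁ s t * g|ℱ t] =ᵐ[μ] adQp r₁ s t * μ[g|ℱ t] :=
        condExp_stronglyMeasurable_mul_of_bound (ℱ.le t) (hQp_sm s t) hg_int 1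
          (ae_of_all _ fun ω => by
            rw [Real.norm_eq_abs, abs_of_nonneg (adQp_nonneg hr₁_bnd s t ω)]
            exact adQp_le_one hr₁_bnd s t ω)
      have hEg : μ[g|ℱ t] =ᵐ[μ] (fun ω => 1 - (μ[r₁ t|ℱ t]) ω) := by
        have h5 : g = (fun _ => (1:ℝ)) - r₁ t := rfl
        rw [h5]
        refine (condExp_sub (integrable_const (1:ℝ)) (hr₁_int t) (ℱ t)).trans ?_
        rw [condExp_const (ℱ.le t)]
        exact Eventually.of_forall fun ω => rfl
      have hbound : (adQp r₁ s t * μ[g|ℱ t]) ≤ᵐ[μ]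
          fun ω => (1 - a₁ * ((t : ℝ) + 1) ^ (-δ₁)) * adQp r₁ s t ω := by
        filter_upwards [hEg, hcond_bnd t] with ω h1 h2
        have hq0' := adQp_nonneg hr₁_bnd s t ω
        have h3 : (1 : ℝ) - (μ[r₁ t|ℱ t]) ω ≤ 1 - a₁ * ((t : ℝ) + 1) ^ (-δ₁) := by linarith
        calc (adQp r₁ s t * μ[g|ℱ t]) ω = adQp r₁ s t ω * (1 - (μ[r₁ t|ℱ t]) ω) := by
              rw [Pi.mul_apply, h1]
          _ ≤ adQp r₁ s t ω * (1 - a₁ * ((t : ℝ) + 1) ^ (-δ₁)) :=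
              mul_le_mul_of_nonneg_left h3 hq0'
          _ = (1 - a₁ * ((t : ℝ) + 1) ^ (-δ₁)) * adQp r₁ s t ω := mul_comm _ _
      have hcondint : Integrable (adQp r₁ s t * μ[g|ℱ t]) μ :=
        (integrable_condExp).congr hpull
      have hstep : ∫ ω, (adQp r₁ s t * g) ω ∂μ
          ≤ (1 - a₁ * ((t : ℝ) + 1) ^ (-δ₁)) * ∫ ω, adQp r₁ s t ω ∂μ := by
        rw [← integral_condExp (ℱ.le t) (f := adQp r₁ s t * g)]
        calc ∫ ω, (μ[adQp r₁ s t * g|ℱ t]) ω ∂μ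
            = ∫ ω, (adQp r₁ s t * μ[g|ℱ t]) ω ∂μ := integral_congr_ae hpull
          _ ≤ ∫ ω, (1 - a₁ * ((t : ℝ) + 1) ^ (-δ₁)) * adQp r₁ s t ω ∂μ :=
              integral_mono_ae hcondint ((hQp_int s t).const_mul _) hbound
          _ = (1 - a₁ * ((t : ℝ) + 1) ^ (-δ₁)) * ∫ ω, adQp r₁ s t ω ∂μ :=
              integral_const_mul _ _
      calc ∫ ω, adQp r₁ s (t+1) ω ∂μ = ∫ ω, (adQp r₁ s t * g) ω ∂μ := by
            refine integral_congr_ae (ae_of_all _ fun ω => ?_)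
            rw [Pi.mul_apply]
            exact adQp_succ hst ω
        _ ≤ (1 - a₁ * ((t : ℝ) + 1) ^ (-δ₁)) * ∫ ω, adQp r₁ s t ω ∂μ := hstep
        _ ≤ (1 - a₁ * ((t : ℝ) + 1) ^ (-δ₁))
            * ∏ u ∈ Finset.Ico s t, (1 - a₁ * ((u : ℝ) + 1) ^ (-δ₁)) :=
            mul_le_mul_of_nonneg_left ih hfac0
        _ = ∏ u ∈ Finset.Ico s (t+1), (1 - a₁ * ((u : ℝ) + 1) ^ (-δ₁)) := by
            rw [Finset.prod_Ico_succ_top hst]; ring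
  -- quantitative bound on the expectation for large t
  have hEQ2 : ∀ t : ℕ, (w t : ℝ) ≤ (t : ℝ) / 2 →
      (∫ ω, adQp r₁ (sσ t) t ω ∂μ) ≤ ((t : ℝ) + 2) ^ (-(δ₀ + 4)) := by
    intro t hwt2
    have h1t : (0:ℝ) < (t:ℝ)+1 := by positivity
    have h2t : (0:ℝ) < (t:ℝ)+2 := by positivity
    have hwle : w t ≤ t := by
      have h : (w t : ℝ) ≤ (t:ℝ) := hwt2.trans (by have h0 : (0:ℝ) ≤ (t:ℝ) := Nat.cast_nonneg t; linarith)
      exact_mod_cast h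
    have hsσt : sσ t ≤ t := Nat.sub_le _ _
    have hcard : (Finset.Ico (sσ t) t).card = w t := by
      rw [Nat.card_Ico]
      simp only [hsσ_def]
      exact Nat.sub_sub_self hwle
    have hstep1 : ∏ u ∈ Finset.Ico (sσ t) t, (1 - a₁ * ((u : ℝ) + 1) ^ (-δ₁))
        ≤ Real.exp (- ∑ u ∈ Finset.Ico (sσ t) t, a₁ * ((u : ℝ) + 1) ^ (-δ₁)) := by
      have he : Real.exp (- ∑ u ∈ Finset.Ico (sσ t) t, a₁ * ((u : ℝ) + 1) ^ (-δ₁))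
          = ∏ u ∈ Finset.Ico (sσ t) t, Real.exp (-(a₁ * ((u : ℝ) + 1) ^ (-δ₁))) := by
        rw [← Real.exp_sum, ← Finset.sum_neg_distrib]
      rw [he]
      apply Finset.prod_le_prod
      · intro u _; linarith [hfac u]
      · intro u _
        have := Real.add_one_le_exp (-(a₁ * ((u : ℝ) + 1) ^ (-δ₁)))
        linarith
    have hsum_lb : (w t : ℝ) * (a₁ * ((t:ℝ)+1) ^ (-δ₁))
        ≤ ∑ u ∈ Finset.Ico (sσ t) t, a₁ * ((u : ℝ) + 1) ^ (-δ₁) := by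
      have h := Finset.card_nsmul_le_sum (Finset.Ico (sσ t) t)
        (fun u => a₁ * ((u:ℝ)+1) ^ (-δ₁)) (a₁ * ((t:ℝ)+1) ^ (-δ₁)) ?_
      · rw [hcard, nsmul_eq_mul] at h
        exact h
      · intro u hu
        have hu' : u < t := (Finset.mem_Ico.1 hu).2
        have h1u : (0:ℝ) < (u:ℝ)+1 := by positivity
        have hle : ((u:ℝ)+1) ≤ ((t:ℝ)+1) := by
          have : (u:ℝ) ≤ (t:ℝ) := by exact_mod_cast hu'.le
          linarith
        have := Real.rpow_le_rpow_of_nonpos h1u hle (by linarith : -δ₁ ≤ 0)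
        exact mul_le_mul_of_nonneg_left this ha₁.le
    have hlog_lb : (δ₀ + 4) * Real.log ((t:ℝ)+2) ≤ (w t : ℝ) * (a₁ * ((t:ℝ)+1) ^ (-δ₁)) := by
      have h7 := hw_lb t
      have h8 : (0:ℝ) < ((t:ℝ)+1) ^ (-δ₁) := Real.rpow_pos_of_pos h1t _
      have h9 : C₂ * ((t:ℝ)+1) ^ δ₁ * Real.log ((t:ℝ)+2) * (a₁ * ((t:ℝ)+1) ^ (-δ₁))
          ≤ (w t:ℝ) * (a₁ * ((t:ℝ)+1) ^ (-δ₁)) :=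
        mul_le_mul_of_nonneg_right h7 (by positivity)
      have h10 : ((t:ℝ)+1) ^ δ₁ * ((t:ℝ)+1) ^ (-δ₁) = 1 := by
        rw [← Real.rpow_add h1t]
        norm_num
      have h11 : (δ₀+4) * Real.log ((t:ℝ)+2)
          = C₂ * ((t:ℝ)+1) ^ δ₁ * Real.log ((t:ℝ)+2) * (a₁ * ((t:ℝ)+1) ^ (-δ₁)) := by
        calc (δ₀+4) * Real.log ((t:ℝ)+2) = a₁ * C₂ * Real.log ((t:ℝ)+2) := by rw [ha₁C₂]
          _ = C₂ * Real.log ((t:ℝ)+2) * (a₁ * (((t:ℝ)+1) ^ δ₁ * ((t:ℝ)+1) ^ (-δ₁))) := by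
              rw [h10]; ring
          _ = C₂ * ((t:ℝ)+1) ^ δ₁ * Real.log ((t:ℝ)+2) * (a₁ * ((t:ℝ)+1) ^ (-δ₁)) := by ring
      linarith [h11 ▸ h9]
    have hfinal : (∫ ω, adQp r₁ (sσ t) t ω ∂μ)
        ≤ Real.exp (-((δ₀+4) * Real.log ((t:ℝ)+2))) := by
      refine (hEQ (sσ t) t hsσt).trans (hstep1.trans ?_)
      apply Real.exp_le_exp.2
      linarith
    refine hfinal.trans_eq ?_
    rw [Real.rpow_def_of_pos h2t]
    congr 1
    ring
  -- Markov's inequality helper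
  have hMarkov : ∀ (f : Ω → ℝ), Integrable f μ → (∀ ω, 0 ≤ f ω) → ∀ ε : ℝ, 0 < ε →
      μ {ω | ε < f ω} ≤ ENNReal.ofReal ((∫ ω, f ω ∂μ) / ε) := by
    intro f hint hpos ε hε
    have h1 := mul_meas_ge_le_integral_of_nonneg (ae_of_all _ hpos) hint ε
    have h2 : μ {ω | ε < f ω} ≤ μ {ω | ε ≤ f ω} :=
      measure_mono (fun ω (h : ε < f ω) => h.le)
    have hne : μ {ω | ε ≤ f ω} ≠ ⊤ := measure_ne_top μ _
    have h3 : (μ {ω | ε ≤ f ω}).toReal ≤ (∫ ω, f ω ∂μ) / ε := by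
      rw [le_div_iff₀ hε, mul_comm]
      exact h1
    calc μ {ω | ε < f ω} ≤ μ {ω | ε ≤ f ω} := h2
      _ = ENNReal.ofReal (μ {ω | ε ≤ f ω}).toReal := (ENNReal.ofReal_toReal hne).symm
      _ ≤ ENNReal.ofReal ((∫ ω, f ω ∂μ) / ε) := ENNReal.ofReal_le_ofReal h3
  -- Borel-Cantelli for the jumps J
  have hJev : ∀ᵐ ω ∂μ, ∀ᶠ t : ℕ in atTop, J t ω ≤ ((t : ℝ) + 1) ^ q := by
    have hJp_pos : ∀ ω, 0 ≤ (J 0 ω) ^ ((2:ℝ) + ε₁) := fun ω =>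
      Real.rpow_nonneg (hJ_nonneg 0 ω) _
    have hI0 : 0 ≤ ∫ ω, (J 0 ω) ^ ((2:ℝ) + ε₁) ∂μ := integral_nonneg hJp_pos
    have hS1 : ∀ t : ℕ, μ {ω | ((t : ℝ) + 1) ^ q < J t ω}
        ≤ ENNReal.ofReal ((∫ ω, (J 0 ω) ^ ((2:ℝ) + ε₁) ∂μ)
          / ((t : ℝ) + 1) ^ (q * (2 + ε₁))) := by
      intro t
      have h1t : (0:ℝ) < (t:ℝ)+1 := by positivity
      have hc0 : (0:ℝ) < ((t:ℝ)+1) ^ q := Real.rpow_pos_of_pos h1t _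
      have hident : μ {ω | ((t : ℝ) + 1) ^ q < J t ω}
          = μ {ω | ((t : ℝ) + 1) ^ q < J 0 ω} := by
        have e1 : {ω | ((t : ℝ) + 1) ^ q < J t ω}
            = J t ⁻¹' Set.Ioi (((t : ℝ) + 1) ^ q) := rfl
        have e2 : {ω | ((t : ℝ) + 1) ^ q < J 0 ω}
            = J 0 ⁻¹' Set.Ioi (((t : ℝ) + 1) ^ q) := rfl
        rw [e1, e2, ← Measure.map_apply (hJ_meas t) measurableSet_Ioi,
          ← Measure.map_apply (hJ_meas 0) measurableSet_Ioi, hJ_ident t]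
      have hsub : {ω | ((t : ℝ) + 1) ^ q < J 0 ω}
          ⊆ {ω | ((t : ℝ) + 1) ^ (q * (2 + ε₁)) < (J 0 ω) ^ ((2:ℝ) + ε₁)} := by
        intro ω h
        have h' : ((t : ℝ) + 1) ^ q < J 0 ω := h
        have h'' := Real.rpow_lt_rpow hc0.le h' hp0
        show ((t : ℝ) + 1) ^ (q * (2 + ε₁)) < (J 0 ω) ^ ((2:ℝ) + ε₁)
        rw [Real.rpow_mul h1t.le]
        exact h''
      calc μ {ω | ((t : ℝ) + 1) ^ q < J t ω}
          = μ {ω | ((t : ℝ) + 1) ^ q < J 0 ω} := hident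
        _ ≤ μ {ω | ((t : ℝ) + 1) ^ (q * (2 + ε₁)) < (J 0 ω) ^ ((2:ℝ) + ε₁)} :=
            measure_mono hsub
        _ ≤ ENNReal.ofReal ((∫ ω, (J 0 ω) ^ ((2:ℝ) + ε₁) ∂μ)
            / ((t : ℝ) + 1) ^ (q * (2 + ε₁))) :=
            hMarkov _ hJ_mom hJp_pos _ (Real.rpow_pos_of_pos h1t _)
    have hsummable : Summable (fun t : ℕ =>
        (∫ ω, (J 0 ω) ^ ((2:ℝ) + ε₁) ∂μ) / ((t : ℝ) + 1) ^ (q * (2 + ε₁))) := by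
      have h := (ad_summable_rpow_neg hqp).mul_left (∫ ω, (J 0 ω) ^ ((2:ℝ) + ε₁) ∂μ)
      refine h.congr fun t => ?_
      rw [div_eq_mul_inv, ← Real.rpow_neg (by positivity : (0:ℝ) ≤ (t:ℝ)+1)]
    have htsum : (∑' t : ℕ, μ {ω | ((t : ℝ) + 1) ^ q < J t ω}) ≠ ⊤ := by
      refine ne_top_of_le_ne_top ?_ (ENNReal.tsum_le_tsum hS1)
      rw [← ENNReal.ofReal_tsum_of_nonneg (fun t => div_nonneg hI0
        (Real.rpow_nonneg (by positivity) _)) hsummable]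
      exact ENNReal.ofReal_ne_top
    filter_upwards [ae_eventually_notMem htsum] with ω hω
    filter_upwards [hω] with t ht
    exact not_lt.1 ht
  -- Borel-Cantelli for the window products
  obtain ⟨Tw, hTw⟩ := eventually_atTop.1 hE_w
  have hQev : ∀ᵐ ω ∂μ, ∀ᶠ t : ℕ in atTop,
      adQp r₁ (sσ t) t ω ≤ ((t : ℝ) + 1) ^ (-(δ₀ + 2)) := by
    set c₀ : ℝ := ((Tw : ℝ) + 1) ^ (2:ℝ) with hc₀_def
    have hTw0 : (0:ℝ) ≤ (Tw:ℝ) := Nat.cast_nonneg _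
    have hc₀1 : 1 ≤ c₀ := Real.one_le_rpow (by linarith) (by norm_num)
    have hS2 : ∀ t : ℕ, μ {ω | ((t : ℝ) + 1) ^ (-(δ₀ + 2)) < adQp r₁ (sσ t) t ω}
        ≤ ENNReal.ofReal (c₀ * ((t : ℝ) + 1) ^ (-(2:ℝ))) := by
      intro t
      have h1t : (0:ℝ) < (t:ℝ)+1 := by positivity
      by_cases ht : Tw ≤ t
      · have hEQt := hEQ2 t (hTw t ht)
        have hm := hMarkov (adQp r₁ (sσ t) t) (hQp_int _ _)
          (adQp_nonneg hr₁_bnd _ _) _ (Real.rpow_pos_of_pos h1t (-(δ₀+2)))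
        refine hm.trans (ENNReal.ofReal_le_ofReal ?_)
        rw [div_eq_mul_inv, ← Real.rpow_neg h1t.le, neg_neg]
        have e3 : (0:ℝ) ≤ ((t:ℝ)+1) ^ (δ₀+2) := Real.rpow_nonneg h1t.le _
        have h12 : ((t:ℝ)+2) ^ (-(δ₀+4)) ≤ ((t:ℝ)+1) ^ (-(δ₀+4)) :=
          Real.rpow_le_rpow_of_nonpos h1t (by linarith) (by linarith)
        have h13 : ((t:ℝ)+1) ^ (-(δ₀+4)) * ((t:ℝ)+1) ^ (δ₀+2) = ((t:ℝ)+1) ^ (-(2:ℝ)) := by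
          rw [← Real.rpow_add h1t]
          congr 1
          ring
        have h14 : ((t:ℝ)+1) ^ (-(2:ℝ)) ≤ c₀ * ((t:ℝ)+1) ^ (-(2:ℝ)) :=
          le_mul_of_one_le_left (Real.rpow_nonneg h1t.le _) hc₀1
        calc (∫ ω, adQp r₁ (sσ t) t ω ∂μ) * ((t:ℝ)+1) ^ (δ₀+2)
            ≤ ((t:ℝ)+2) ^ (-(δ₀+4)) * ((t:ℝ)+1) ^ (δ₀+2) :=
              mul_le_mul_of_nonneg_right hEQt e3
          _ ≤ ((t:ℝ)+1) ^ (-(δ₀+4)) * ((t:ℝ)+1) ^ (δ₀+2) :=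
              mul_le_mul_of_nonneg_right h12 e3
          _ = ((t:ℝ)+1) ^ (-(2:ℝ)) := h13
          _ ≤ c₀ * ((t:ℝ)+1) ^ (-(2:ℝ)) := h14
      · push_neg at ht
        refine (prob_le_one).trans ?_
        rw [← ENNReal.ofReal_one]
        apply ENNReal.ofReal_le_ofReal
        have h15 : ((t:ℝ)+1) ^ (2:ℝ) ≤ c₀ := by
          apply Real.rpow_le_rpow h1t.le ?_ (by norm_num)
          have : (t:ℝ) ≤ (Tw:ℝ) := by exact_mod_cast ht.le
          linarith
        have h16 : (0:ℝ) < ((t:ℝ)+1) ^ (2:ℝ) := Real.rpow_pos_of_pos h1t _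
        rw [show ((t:ℝ)+1) ^ (-(2:ℝ)) = (((t:ℝ)+1) ^ (2:ℝ))⁻¹ from by
          rw [← Real.rpow_neg h1t.le]]
        rw [← div_eq_mul_inv, le_div_iff₀ h16]
        linarith
    have hsummable2 : Summable (fun t : ℕ => c₀ * ((t : ℝ) + 1) ^ (-(2:ℝ))) :=
      (ad_summable_rpow_neg (by norm_num : (1:ℝ) < 2)).mul_left c₀
    have htsum2 : (∑' t : ℕ, μ {ω | ((t : ℝ) + 1) ^ (-(δ₀ + 2)) < adQp r₁ (sσ t) t ω}) ≠ ⊤ := by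
      refine ne_top_of_le_ne_top ?_ (ENNReal.tsum_le_tsum hS2)
      rw [← ENNReal.ofReal_tsum_of_nonneg (fun t => mul_nonneg (by linarith)
        (Real.rpow_nonneg (by positivity) _)) hsummable2]
      exact ENNReal.ofReal_ne_top
    filter_upwards [ae_eventually_notMem htsum2] with ω hω
    filter_upwards [hω] with t ht
    exact not_lt.1 ht
  -- pathwise conclusion
  filter_upwards [hJev, hQev, hU_bdd, ae_all_iff.2 hrec] with ω hJω hQω hUω hrecω
  obtain ⟨TJ, hTJ⟩ := eventually_atTop.1 hJω
  obtain ⟨TQ, hTQ⟩ := eventually_atTop.1 hQω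
  obtain ⟨B, hB⟩ := hUω
  have hBt : ∀ t, U t ω ≤ B := fun t => hB (Set.mem_range_self t)
  set K : ℝ := max (max B (z TJ ω)) 1 with hK_def
  have hK1 : (1:ℝ) ≤ K := le_max_right _ _
  have hK0 : (0:ℝ) < K := lt_of_lt_of_le one_pos hK1
  have hKz : z TJ ω ≤ K := (le_max_right _ _).trans (le_max_left _ _)
  have hUK : ∀ t, U t ω ≤ K := fun t =>
    (hBt t).trans ((le_max_left _ _).trans (le_max_left _ _))
  have hc2aK : (0:ℝ) ≤ 2 * a₂ * K := by positivity
  -- noise bound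
  have hnoise : ∀ t : ℕ, TJ ≤ t →
      r₂ t * U t ω * (1 + J t ω) ≤ 2 * a₂ * K * ((t : ℝ) + 1) ^ (q - δ₂) := by
    intro t ht
    have h1t : (0:ℝ) < (t:ℝ)+1 := by positivity
    have hJt : J t ω ≤ ((t : ℝ) + 1) ^ q := hTJ t ht
    have hr₂t : r₂ t ≤ a₂ * ((t : ℝ) + 1) ^ (-δ₂) := by
      have h := hr₂ t
      rwa [div_eq_mul_inv, ← Real.rpow_neg h1t.le] at h
    have h1J : 1 + J t ω ≤ 2 * ((t : ℝ) + 1) ^ q := by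
      have h2 : (1:ℝ) ≤ ((t : ℝ) + 1) ^ q := Real.one_le_rpow (by linarith) hq0.le
      linarith
    have hJ0 : (0:ℝ) ≤ 1 + J t ω := by linarith [hJ_nonneg t ω]
    have hstep : r₂ t * U t ω ≤ (a₂ * ((t : ℝ) + 1) ^ (-δ₂)) * K :=
      mul_le_mul hr₂t (hUK t) (hU_nonneg t ω)
        (mul_nonneg ha₂.le (Real.rpow_nonneg h1t.le _))
    have hstep2 : r₂ t * U t ω * (1 + J t ω)
        ≤ ((a₂ * ((t : ℝ) + 1) ^ (-δ₂)) * K) * (2 * ((t : ℝ) + 1) ^ q) := by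
      apply mul_le_mul hstep h1J hJ0
      exact mul_nonneg (mul_nonneg ha₂.le (Real.rpow_nonneg h1t.le _)) hK0.le
    refine hstep2.trans_eq ?_
    have e1 : ((t : ℝ) + 1) ^ (-δ₂) * ((t : ℝ) + 1) ^ q = ((t : ℝ) + 1) ^ (q - δ₂) := by
      rw [← Real.rpow_add h1t]
      ring_nf
    calc (a₂ * ((t : ℝ) + 1) ^ (-δ₂)) * K * (2 * ((t : ℝ) + 1) ^ q)
        = 2 * a₂ * K * (((t : ℝ) + 1) ^ (-δ₂) * ((t : ℝ) + 1) ^ q) := by ring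
      _ = 2 * a₂ * K * ((t : ℝ) + 1) ^ (q - δ₂) := by rw [e1]
  -- pathwise unrolled recursion
  have hmain : ∀ t : ℕ, TJ ≤ t → z t ω ≤ K * adQp r₁ TJ t ω
      + ∑ s ∈ Finset.Ico TJ t,
        (2 * a₂ * K * ((s : ℝ) + 1) ^ (q - δ₂)) * adQp r₁ (s+1) t ω := by
    intro t ht
    induction t, ht using Nat.le_induction with
    | base => simpa [adQp_self] using hKz
    | succ t ht ih =>
      have hr0 := (hr₁_bnd t ω).1
      have hr1 := (hr₁_bnd t ω).2
      have h1 : z (t+1) ω ≤ (1 - r₁ t ω) * z t ω + r₂ t * U t ω * (1 + J t ω) := hrecω t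
      have h2 : (1 - r₁ t ω) * z t ω ≤ (1 - r₁ t ω) * (K * adQp r₁ TJ t ω
          + ∑ s ∈ Finset.Ico TJ t,
            (2 * a₂ * K * ((s : ℝ) + 1) ^ (q - δ₂)) * adQp r₁ (s+1) t ω) :=
        mul_le_mul_of_nonneg_left ih (by linarith)
      have h3 := hnoise t ht
      have e1 : ∀ s ∈ Finset.Ico TJ t,
          (2 * a₂ * K * ((s : ℝ) + 1) ^ (q - δ₂)) * adQp r₁ (s+1) (t+1) ω
          = ((2 * a₂ * K * ((s : ℝ) + 1) ^ (q - δ₂)) * adQp r₁ (s+1) t ω)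
            * (1 - r₁ t ω) := by
        intro s hs
        rw [adQp_succ (Finset.mem_Ico.1 hs).2 ω]
        ring
      have e2 : K * adQp r₁ TJ (t+1) ω + ∑ s ∈ Finset.Ico TJ (t+1),
            (2 * a₂ * K * ((s : ℝ) + 1) ^ (q - δ₂)) * adQp r₁ (s+1) (t+1) ω
          = (1 - r₁ t ω) * (K * adQp r₁ TJ t ω
            + ∑ s ∈ Finset.Ico TJ t,
              (2 * a₂ * K * ((s : ℝ) + 1) ^ (q - δ₂)) * adQp r₁ (s+1) t ω)
            + 2 * a₂ * K * ((t : ℝ) + 1) ^ (q - δ₂) := by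
        rw [Finset.sum_Ico_succ_top ht, Finset.sum_congr rfl e1, adQp_succ ht ω,
          adQp_self, ← Finset.sum_mul]
        ring
      rw [e2]
      linarith
  -- the limiting bound
  set β' : ℝ := δ₂ - q with hβ'_def
  set D1 : ℝ := (2 * C₂ / c₁) * (2 * a₂ * K) * 2 ^ β' with hD1_def
  set D2 : ℝ := 2 * (2 * a₂ * K) * 2 ^ β' with hD2_def
  have h2β : (0:ℝ) ≤ (2:ℝ) ^ β' := Real.rpow_nonneg (by norm_num) _
  have hD1nn : (0:ℝ) ≤ (2 * C₂ / c₁) * (2 * a₂ * K) :=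
    mul_nonneg (div_nonneg (by linarith) hc₁0.le) hc2aK
  have hG : Tendsto (fun t : ℕ => K * ((t : ℝ) + 1) ^ (-(2:ℝ))
      + 2 * a₂ * K * ((t : ℝ) + 1) ^ (-(1:ℝ))
      + D1 * ((t : ℝ) + 1) ^ (-(η / 2)) + D2 * ((t : ℝ) + 1) ^ (-η)) atTop (nhds 0) := by
    have h1 := ad_tendsto_rpow_neg K (by norm_num : (0:ℝ) < 2)
    have h2 := ad_tendsto_rpow_neg (2 * a₂ * K) one_pos
    have h3 := ad_tendsto_rpow_neg D1 (by linarith : (0:ℝ) < η / 2)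
    have h4 := ad_tendsto_rpow_neg D2 hη0
    simpa using ((h1.add h2).add h3).add h4
  refine tendsto_of_tendsto_of_tendsto_of_le_of_le' tendsto_const_nhds hG ?_ ?_
  · exact Eventually.of_forall fun t =>
      mul_nonneg (Real.rpow_nonneg (by positivity) _) (hz_nonneg t ω)
  · filter_upwards [eventually_ge_atTop TJ, eventually_ge_atTop TQ, hE_w,
      eventually_ge_atTop (2 * (TJ + 1))] with t ht1 ht2 ht3 ht4
    have h1t : (0:ℝ) < (t:ℝ)+1 := by positivity
    have hwle : w t ≤ t := by
      have h : (w t : ℝ) ≤ (t:ℝ) := ht3.trans (by have h0 : (0:ℝ) ≤ (t:ℝ) := Nat.cast_nonneg t; linarith)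
      exact_mod_cast h
    have hsσR : ((sσ t : ℕ) : ℝ) = (t:ℝ) - (w t : ℝ) := by
      simp only [hsσ_def]
      rw [Nat.cast_sub hwle]
    have hsσ_half : (t:ℝ)/2 ≤ (sσ t : ℝ) := by rw [hsσR]; linarith
    have hTJσ : TJ + 1 ≤ sσ t := by
      have h5 : ((TJ:ℝ)+1) ≤ (t:ℝ)/2 := by
        have h6 : ((2 * (TJ + 1) : ℕ) : ℝ) ≤ (t:ℝ) := by exact_mod_cast ht4
        push_cast at h6
        linarith
      have h7 : ((TJ:ℝ)+1) ≤ (sσ t : ℝ) := h5.trans hsσ_half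
      exact_mod_cast h7
    have hTJσ' : TJ ≤ sσ t := le_trans (Nat.le_succ TJ) hTJσ
    have hsσt : sσ t ≤ t := Nat.sub_le _ _
    have hQσ : adQp r₁ (sσ t) t ω ≤ ((t:ℝ)+1) ^ (-(δ₀+2)) := hTQ t ht2
    have hQT : adQp r₁ TJ t ω ≤ ((t:ℝ)+1) ^ (-(δ₀+2)) :=
      (adQp_mono hr₁_bnd hTJσ' hsσt ω).trans hQσ
    have hz_bound := hmain t ht1
    rw [← Finset.sum_Ico_consecutive
      (fun s => (2 * a₂ * K * ((s : ℝ) + 1) ^ (q - δ₂)) * adQp r₁ (s+1) t ω)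
      hTJσ' hsσt] at hz_bound
    -- bound the first partial sum
    have hSb1 : ∑ s ∈ Finset.Ico TJ (sσ t),
        (2 * a₂ * K * ((s : ℝ) + 1) ^ (q - δ₂)) * adQp r₁ (s+1) t ω
        ≤ (t:ℝ) * (2 * a₂ * K * ((t:ℝ)+1) ^ (-(δ₀+2))) := by
      have hterm : ∀ s ∈ Finset.Ico TJ (sσ t),
          (2 * a₂ * K * ((s : ℝ) + 1) ^ (q - δ₂)) * adQp r₁ (s+1) t ω
          ≤ 2 * a₂ * K * ((t:ℝ)+1) ^ (-(δ₀+2)) := by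
        intro s hs
        have hs' : s < sσ t := (Finset.mem_Ico.1 hs).2
        have h1s : (0:ℝ) < (s:ℝ)+1 := by positivity
        have hcs : 2 * a₂ * K * ((s : ℝ) + 1) ^ (q - δ₂) ≤ 2 * a₂ * K * 1 :=
          mul_le_mul_of_nonneg_left
            (Real.rpow_le_one_of_one_le_of_nonpos (by linarith) (by linarith)) hc2aK
        have hQs : adQp r₁ (s+1) t ω ≤ ((t:ℝ)+1) ^ (-(δ₀+2)) :=
          (adQp_mono hr₁_bnd hs' hsσt ω).trans hQσ
        calc (2 * a₂ * K * ((s : ℝ) + 1) ^ (q - δ₂)) * adQp r₁ (s+1) t ω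
            ≤ (2 * a₂ * K * 1) * (((t:ℝ)+1) ^ (-(δ₀+2))) :=
            mul_le_mul hcs hQs (adQp_nonneg hr₁_bnd _ _ _) (by linarith)
          _ = 2 * a₂ * K * ((t:ℝ)+1) ^ (-(δ₀+2)) := by ring
      have h := Finset.sum_le_card_nsmul _ _ _ hterm
      rw [nsmul_eq_mul] at h
      refine h.trans ?_
      apply mul_le_mul_of_nonneg_right ?_
        (mul_nonneg hc2aK (Real.rpow_nonneg h1t.le _))
      rw [Nat.card_Ico]
      exact_mod_cast le_trans (Nat.sub_le _ _) hsσt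
    -- bound the second partial sum
    have hσ1 : (0:ℝ) < (sσ t : ℝ) + 1 := by positivity
    have hSb2 : ∑ s ∈ Finset.Ico (sσ t) t,
        (2 * a₂ * K * ((s : ℝ) + 1) ^ (q - δ₂)) * adQp r₁ (s+1) t ω
        ≤ (w t : ℝ) * (2 * a₂ * K * (((sσ t : ℝ) + 1) ^ (q - δ₂))) := by
      have hterm : ∀ s ∈ Finset.Ico (sσ t) t,
          (2 * a₂ * K * ((s : ℝ) + 1) ^ (q - δ₂)) * adQp r₁ (s+1) t ω
          ≤ 2 * a₂ * K * (((sσ t : ℝ) + 1) ^ (q - δ₂)) := by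
        intro s hs
        have hs1 : sσ t ≤ s := (Finset.mem_Ico.1 hs).1
        have hless : ((sσ t : ℝ) + 1) ≤ ((s:ℝ)+1) := by
          have h8 : ((sσ t : ℕ) : ℝ) ≤ (s:ℝ) := by exact_mod_cast hs1
          linarith
        have hrp : ((s : ℝ) + 1) ^ (q - δ₂) ≤ ((sσ t : ℝ) + 1) ^ (q - δ₂) :=
          Real.rpow_le_rpow_of_nonpos hσ1 hless (by linarith)
        calc (2 * a₂ * K * ((s : ℝ) + 1) ^ (q - δ₂)) * adQp r₁ (s+1) t ω
            ≤ (2 * a₂ * K * (((sσ t : ℝ) + 1) ^ (q - δ₂))) * 1 :=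
            mul_le_mul (mul_le_mul_of_nonneg_left hrp hc2aK)
              (adQp_le_one hr₁_bnd _ _ _) (adQp_nonneg hr₁_bnd _ _ _)
              (mul_nonneg hc2aK (Real.rpow_nonneg hσ1.le _))
          _ = 2 * a₂ * K * (((sσ t : ℝ) + 1) ^ (q - δ₂)) := mul_one _
      have h := Finset.sum_le_card_nsmul _ _ _ hterm
      have hcard2 : (Finset.Ico (sσ t) t).card = w t := by
        rw [Nat.card_Ico]
        simp only [hsσ_def]
        exact Nat.sub_sub_self hwle
      rw [nsmul_eq_mul, hcard2] at h
      exact h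
    have hKQ : K * adQp r₁ TJ t ω ≤ K * ((t:ℝ)+1) ^ (-(δ₀+2)) :=
      mul_le_mul_of_nonneg_left hQT hK0.le
    have hztot : z t ω ≤ K * ((t:ℝ)+1) ^ (-(δ₀+2))
        + (t:ℝ) * (2 * a₂ * K * ((t:ℝ)+1) ^ (-(δ₀+2)))
        + (w t : ℝ) * (2 * a₂ * K * (((sσ t : ℝ) + 1) ^ (q - δ₂))) := by
      linarith
    have hδpow : (0:ℝ) ≤ ((t:ℝ)+1) ^ δ₀ := Real.rpow_nonneg h1t.le _
    have hmul : ((t:ℝ)+1) ^ δ₀ * z t ω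
        ≤ ((t:ℝ)+1) ^ δ₀ * (K * ((t:ℝ)+1) ^ (-(δ₀+2)))
        + ((t:ℝ)+1) ^ δ₀ * ((t:ℝ) * (2 * a₂ * K * ((t:ℝ)+1) ^ (-(δ₀+2))))
        + ((t:ℝ)+1) ^ δ₀ * ((w t : ℝ) * (2 * a₂ * K * (((sσ t : ℝ) + 1) ^ (q - δ₂)))) := by
      have h := mul_le_mul_of_nonneg_left hztot hδpow
      rw [mul_add, mul_add] at h
      exact h
    have TA : ((t:ℝ)+1) ^ δ₀ * (K * ((t:ℝ)+1) ^ (-(δ₀+2))) = K * ((t:ℝ)+1) ^ (-(2:ℝ)) := by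
      rw [show ((t:ℝ)+1) ^ δ₀ * (K * ((t:ℝ)+1) ^ (-(δ₀+2)))
        = K * (((t:ℝ)+1) ^ δ₀ * ((t:ℝ)+1) ^ (-(δ₀+2))) from by ring,
        ← Real.rpow_add h1t, show δ₀ + -(δ₀+2) = -(2:ℝ) from by ring]
    have TB : ((t:ℝ)+1) ^ δ₀ * ((t:ℝ) * (2 * a₂ * K * ((t:ℝ)+1) ^ (-(δ₀+2))))
        ≤ 2 * a₂ * K * ((t:ℝ)+1) ^ (-(1:ℝ)) := by
      have e7 : ((t:ℝ)+1) ^ δ₀ * (((t:ℝ)+1) * (2 * a₂ * K * ((t:ℝ)+1) ^ (-(δ₀+2))))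
          = 2 * a₂ * K * ((t:ℝ)+1) ^ (-(1:ℝ)) := by
        rw [show ((t:ℝ)+1) ^ δ₀ * (((t:ℝ)+1) * (2 * a₂ * K * ((t:ℝ)+1) ^ (-(δ₀+2))))
          = 2 * a₂ * K * (((t:ℝ)+1) ^ δ₀ * ((t:ℝ)+1) ^ (-(δ₀+2)) * ((t:ℝ)+1)) from by ring,
          ← Real.rpow_add h1t, show δ₀ + -(δ₀+2) = -(2:ℝ) from by ring]
        rw [show 2 * a₂ * K * (((t:ℝ)+1) ^ (-(2:ℝ)) * ((t:ℝ)+1))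
          = 2 * a₂ * K * (((t:ℝ)+1) ^ (-(2:ℝ)) * ((t:ℝ)+1) ^ (1:ℝ)) from by
            rw [Real.rpow_one],
          ← Real.rpow_add h1t, show -(2:ℝ) + 1 = -(1:ℝ) from by norm_num]
      refine le_trans ?_ e7.le
      apply mul_le_mul_of_nonneg_left ?_ hδpow
      exact mul_le_mul_of_nonneg_right (by linarith)
        (mul_nonneg hc2aK (Real.rpow_nonneg h1t.le _))
    have TC : ((t:ℝ)+1) ^ δ₀ * ((w t : ℝ) * (2 * a₂ * K * (((sσ t : ℝ) + 1) ^ (q - δ₂))))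
        ≤ D1 * ((t:ℝ)+1) ^ (-(η/2)) + D2 * ((t:ℝ)+1) ^ (-η) := by
      have heq : q - δ₂ = -β' := by rw [hβ'_def]; ring
      have hσb : ((sσ t : ℝ)+1) ^ (q - δ₂) ≤ 2 ^ β' * ((t:ℝ)+1) ^ (-β') := by
        have h21 : (0:ℝ) < ((t:ℝ)+1)/2 := by linarith
        have hhalf : ((t:ℝ)+1)/2 ≤ (sσ t : ℝ) + 1 := by linarith
        have h22 : ((sσ t : ℝ)+1) ^ (q - δ₂) ≤ (((t:ℝ)+1)/2) ^ (q - δ₂) :=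
          Real.rpow_le_rpow_of_nonpos h21 hhalf (by linarith)
        have h23 : (((t:ℝ)+1)/2) ^ (q - δ₂) = ((t:ℝ)+1) ^ (q - δ₂) / 2 ^ (q - δ₂) :=
          Real.div_rpow h1t.le (by norm_num) _
        have h24 : ((t:ℝ)+1) ^ (q - δ₂) / 2 ^ (q - δ₂) = 2 ^ β' * ((t:ℝ)+1) ^ (-β') := by
          rw [heq, Real.rpow_neg (by norm_num : (0:ℝ) ≤ 2), div_eq_mul_inv, inv_inv, mul_comm]
        rw [h23, h24] at h22
        exact h22
      have hwub := hw_ub2 t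
      have hw0 : (0:ℝ) ≤ (w t : ℝ) := Nat.cast_nonneg _
      have hbig0 : (0:ℝ) ≤ (2 * C₂ / c₁) * ((t : ℝ) + 1) ^ (δ₁ + c₁) + 2 := by
        have := Real.rpow_nonneg h1t.le (δ₁ + c₁)
        have h25 : (0:ℝ) ≤ 2 * C₂ / c₁ := div_nonneg (by linarith) hc₁0.le
        have h27 := mul_nonneg h25 (Real.rpow_nonneg h1t.le (δ₁ + c₁))
        linarith
      have hstep : ((t:ℝ)+1) ^ δ₀ * ((w t : ℝ) * (2 * a₂ * K * (((sσ t : ℝ) + 1) ^ (q - δ₂))))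
          ≤ ((t:ℝ)+1) ^ δ₀ * (((2 * C₂ / c₁) * ((t : ℝ) + 1) ^ (δ₁ + c₁) + 2)
            * (2 * a₂ * K * (2 ^ β' * ((t:ℝ)+1) ^ (-β')))) := by
        apply mul_le_mul_of_nonneg_left ?_ hδpow
        apply mul_le_mul hwub (mul_le_mul_of_nonneg_left hσb hc2aK)
          (mul_nonneg hc2aK (Real.rpow_nonneg hσ1.le _)) hbig0
      refine hstep.trans ?_
      have hE1 : ((t:ℝ)+1) ^ δ₀ * ((t:ℝ)+1) ^ (δ₁ + c₁) * ((t:ℝ)+1) ^ (-β')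
          ≤ ((t:ℝ)+1) ^ (-(η/2)) := by
        rw [← Real.rpow_add h1t, ← Real.rpow_add h1t]
        apply Real.rpow_le_rpow_of_exponent_le (by linarith)
        have h26 : δ₀ + δ₁ + η ≤ β' := hβ
        linarith
      have hE2 : ((t:ℝ)+1) ^ δ₀ * ((t:ℝ)+1) ^ (-β') ≤ ((t:ℝ)+1) ^ (-η) := by
        rw [← Real.rpow_add h1t]
        apply Real.rpow_le_rpow_of_exponent_le (by linarith)
        have h26 : δ₀ + δ₁ + η ≤ β' := hβ
        linarith
      calc ((t:ℝ)+1) ^ δ₀ * (((2 * C₂ / c₁) * ((t : ℝ) + 1) ^ (δ₁ + c₁) + 2)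
            * (2 * a₂ * K * (2 ^ β' * ((t:ℝ)+1) ^ (-β'))))
          = (2 * C₂ / c₁) * (2 * a₂ * K) * 2 ^ β'
              * (((t:ℝ)+1) ^ δ₀ * ((t:ℝ)+1) ^ (δ₁ + c₁) * ((t:ℝ)+1) ^ (-β'))
            + 2 * (2 * a₂ * K) * 2 ^ β'
              * (((t:ℝ)+1) ^ δ₀ * ((t:ℝ)+1) ^ (-β')) := by ring
        _ ≤ (2 * C₂ / c₁) * (2 * a₂ * K) * 2 ^ β' * ((t:ℝ)+1) ^ (-(η/2))
            + 2 * (2 * a₂ * K) * 2 ^ β' * ((t:ℝ)+1) ^ (-η) := by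
            apply add_le_add
            · exact mul_le_mul_of_nonneg_left hE1 (mul_nonneg hD1nn h2β)
            · exact mul_le_mul_of_nonneg_left hE2
                (mul_nonneg (mul_nonneg (by norm_num) hc2aK) h2β)
        _ = D1 * ((t:ℝ)+1) ^ (-(η/2)) + D2 * ((t:ℝ)+1) ^ (-η) := by
            rw [hD1_def, hD2_def]
    linarith
end
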